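/- Let F be a cumulative distribution function on ℝ with mean μ whose support is contained in [a,b], a < b, a,b ∈ ℝ. Then max over S ∈ 𝔖_n of P(|S − E[S]| ≤ b − a) equals 1; that is, there exists S ∈ 𝔖_n with |S − nμ| ≤ b − a almost surely. -/

import Mathlib

open MeasureTheory ProbabilityTheory Set Filter Topology Asymptotics

open scoped ENNReal

instance myFactZeroLtOne : Fact ((0:ℝ) < 1) := ⟨zero_lt_one⟩

noncomputable def myQ (ν : Measure ℝ) (a : ℝ) (t : ℝ) : ℝ :=
  sInf {x | min t 1 ≤ cdf ν x ∧ a ≤ x}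

variable {ν : Measure ℝ} {a b : ℝ}

lemma nu_Iic_zero [IsProbabilityMeasure ν] (hsupp : ν (Icc a b)ᶜ = 0)
    {x : ℝ} (hx : x < a) : ν (Iic x) = 0 := by
  refine measure_mono_null (fun y hy => ?_) hsupp
  simp only [mem_compl_iff, mem_Icc, not_and, not_le]
  intro hay; exact absurd (le_trans hay (mem_Iic.mp hy)) (not_le.mpr hx)

lemma cdf_b_eq [IsProbabilityMeasure ν] (hab : a ≤ b) (hsupp : ν (Icc a b)ᶜ = 0) :
    cdf ν b = 1 := by
  have h1 : ν (Iic b) = 1 := by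
    have h : ν (Icc a b) = 1 := by
      have := measure_add_measure_compl (μ := ν) (s := Icc a b) measurableSet_Icc
      rw [hsupp, add_zero] at this; rw [this]; exact measure_univ
    refine le_antisymm prob_le_one ?_
    rw [← h]; exact measure_mono Icc_subset_Iic_self
  have h2 := ofReal_cdf (μ := ν) b
  rw [h1] at h2
  have h3 := cdf_nonneg (μ := ν) b
  have h4 := congrArg ENNReal.toReal h2
  rwa [ENNReal.toReal_ofReal h3, ENNReal.toReal_one] at h4

lemma cdf_lt_a [IsProbabilityMeasure ν] (hsupp : ν (Icc a b)ᶜ = 0)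
    {x : ℝ} (hx : x < a) : cdf ν x = 0 := by
  have h2 := ofReal_cdf (μ := ν) x
  rw [nu_Iic_zero hsupp hx] at h2
  have h3 := cdf_nonneg (μ := ν) x
  have h4 := ENNReal.ofReal_eq_zero.mp h2
  linarith

lemma mem_myQ_set [IsProbabilityMeasure ν] (hab : a ≤ b) (hsupp : ν (Icc a b)ᶜ = 0)
    (t : ℝ) : b ∈ {x | min t 1 ≤ cdf ν x ∧ a ≤ x} :=
  ⟨by rw [cdf_b_eq hab hsupp]; exact min_le_right _ _, hab⟩

lemma bdd_myQ_set (t : ℝ) : a ∈ lowerBounds {x | min t 1 ≤ cdf ν x ∧ a ≤ x} :=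
  fun _ hx => hx.2

lemma myQ_mem_Icc [IsProbabilityMeasure ν] (hab : a ≤ b) (hsupp : ν (Icc a b)ᶜ = 0)
    (t : ℝ) : myQ ν a t ∈ Icc a b :=
  ⟨le_csInf ⟨b, mem_myQ_set hab hsupp t⟩ (fun _ hx => hx.2),
   csInf_le ⟨a, bdd_myQ_set t⟩ (mem_myQ_set hab hsupp t)⟩

lemma myQ_mono [IsProbabilityMeasure ν] (hab : a ≤ b) (hsupp : ν (Icc a b)ᶜ = 0) :
    Monotone (myQ ν a) := by
  intro t₁ t₂ h
  exact csInf_le_csInf ⟨a, bdd_myQ_set t₁⟩ ⟨b, mem_myQ_set hab hsupp t₂⟩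
    (fun x hx => ⟨le_trans (min_le_min h le_rfl) hx.1, hx.2⟩)

lemma myQ_galois [IsProbabilityMeasure ν] (hab : a ≤ b) (hsupp : ν (Icc a b)ᶜ = 0)
    {u : ℝ} (hu : u ∈ Ioc (0:ℝ) 1) (x : ℝ) :
    myQ ν a u ≤ x ↔ u ≤ cdf ν x := by
  have hmin : min u 1 = u := min_eq_left hu.2
  constructor
  · intro h
    have key : ∀ y, x < y → u ≤ cdf ν y := by
      intro y hy
      obtain ⟨s, hs, hsy⟩ := exists_lt_of_csInf_lt ⟨b, mem_myQ_set hab hsupp u⟩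
        (lt_of_le_of_lt h hy)
      calc u = min u 1 := hmin.symm
        _ ≤ cdf ν s := hs.1
        _ ≤ cdf ν y := monotone_cdf (μ := ν) hsy.le
    have hrc : Tendsto (cdf ν) (𝓝[>] x) (𝓝 (cdf ν x)) :=
      ((cdf ν).right_continuous x).tendsto.mono_left
        (nhdsWithin_mono x Ioi_subset_Ici_self)
    exact ge_of_tendsto hrc (eventually_nhdsWithin_of_forall (fun y hy => key y hy))
  · intro h
    have hax : a ≤ x := by
      by_contra hx
      rw [cdf_lt_a hsupp (not_le.mp hx)] at h
      exact absurd (lt_of_lt_of_le hu.1 h) (lt_irrefl 0)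
    exact csInf_le ⟨a, bdd_myQ_set u⟩ ⟨hmin.le.trans h, hax⟩

lemma myQ_map_eq [IsProbabilityMeasure ν] (hab : a ≤ b) (hsupp : ν (Icc a b)ᶜ = 0) :
    Measure.map (myQ ν a) (volume.restrict (Ioc (0:ℝ) 1)) = ν := by
  have hmeas : Measurable (myQ ν a) := (myQ_mono hab hsupp).measurable
  have hP : IsProbabilityMeasure (volume.restrict (Ioc (0:ℝ) 1)) :=
    ⟨by simp [Real.volume_Ioc]⟩
  have : IsProbabilityMeasure (Measure.map (myQ ν a) (volume.restrict (Ioc (0:ℝ) 1))) :=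
    Measure.isProbabilityMeasure_map hmeas.aemeasurable
  refine Measure.ext_of_Iic _ _ (fun x => ?_)
  rw [Measure.map_apply hmeas measurableSet_Iic, Measure.restrict_apply (hmeas measurableSet_Iic)]
  rcases lt_or_ge x a with hx | hx
  · have h1 : myQ ν a ⁻¹' Iic x ∩ Ioc 0 1 = ∅ := by
      ext u; simp only [mem_inter_iff, mem_preimage, mem_Iic, mem_empty_iff_false, iff_false]
      rintro ⟨hq, hu⟩
      exact absurd (le_trans (myQ_mem_Icc hab hsupp u).1 hq) (not_le.mpr hx)
    rw [h1, nu_Iic_zero hsupp hx, measure_empty]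
  · have h1 : myQ ν a ⁻¹' Iic x ∩ Ioc 0 1 = Ioc 0 (cdf ν x) := by
      ext u
      simp only [mem_inter_iff, mem_preimage, mem_Iic, mem_Ioc]
      constructor
      · rintro ⟨hq, hu1, hu2⟩
        exact ⟨hu1, (myQ_galois hab hsupp ⟨hu1, hu2⟩ x).mp hq⟩
      · rintro ⟨hu1, hu2⟩
        have hu : u ∈ Ioc (0:ℝ) 1 := ⟨hu1, hu2.trans (cdf_le_one (μ := ν) x)⟩
        exact ⟨(myQ_galois hab hsupp hu x).mpr hu2, hu.1, hu.2⟩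
    rw [h1, Real.volume_Ioc, sub_zero, ofReal_cdf]

lemma tau_decomp {n : ℕ} (hn : 0 < n) (u : ℝ) :
    ∃ s : ℝ, 0 < s ∧ s ≤ 1/(n:ℝ) ∧ ∃ j : Fin n, ∀ i : Fin n,
      toIocMod zero_lt_one 0 (u + (i:ℕ)/(n:ℝ)) = s + (((i + j : Fin n):ℕ):ℝ)/(n:ℝ) := by
  have hn' : (0:ℝ) < n := Nat.cast_pos.mpr hn
  set r : ℝ := toIocMod zero_lt_one 0 u with hr_def
  have hr : r ∈ Ioc (0:ℝ) 1 := by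
    have := toIocMod_mem_Ioc zero_lt_one 0 u
    rwa [zero_add] at this
  have hceil_pos : 1 ≤ ⌈(n:ℝ) * r⌉ := by
    rw [Int.le_ceil_iff]; push_cast; simpa using mul_pos hn' hr.1
  have hceil_le : ⌈(n:ℝ) * r⌉ ≤ n := by
    rw [Int.ceil_le]; push_cast
    calc (n:ℝ) * r ≤ n * 1 := by nlinarith [hr.2]
      _ = n := mul_one _
  set jz : ℤ := ⌈(n:ℝ) * r⌉ - 1 with hjz
  have hjz0 : 0 ≤ jz := by omega
  have hjv : jz.toNat < n := by omega
  have hjr : ((jz.toNat : ℕ) : ℝ) = (jz : ℝ) := by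
    exact_mod_cast congrArg (Int.cast : ℤ → ℝ) (Int.toNat_of_nonneg hjz0)
  have h1 : (jz:ℝ) < n * r := by
    have := Int.ceil_lt_add_one ((n:ℝ) * r)
    push_cast [hjz]; push_cast at this; linarith
  have h2 : (n:ℝ) * r ≤ jz + 1 := by
    have := Int.le_ceil ((n:ℝ) * r)
    push_cast [hjz]; linarith
  set s : ℝ := r - (jz.toNat : ℝ)/n with hs_def
  have hs0 : 0 < s := by
    rw [hs_def, sub_pos, div_lt_iff₀ hn', hjr]; linarith
  have hs1 : s ≤ 1/(n:ℝ) := by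
    rw [hs_def, sub_le_iff_le_add, ← add_div, le_div_iff₀ hn', hjr]; linarith
  refine ⟨s, hs0, hs1, ⟨jz.toNat, hjv⟩, ?_⟩
  intro i
  have hstep1 : toIocMod zero_lt_one 0 (u + (i:ℕ)/(n:ℝ))
      = toIocMod zero_lt_one 0 (r + (i:ℕ)/(n:ℝ)) := by
    set d : ℤ := toIocDiv zero_lt_one 0 u with hd
    have hu : r + d • (1:ℝ) = u := toIocMod_add_toIocDiv_zsmul _ _ _
    have harg : u + (i:ℕ)/(n:ℝ) = (r + (i:ℕ)/(n:ℝ)) + d • (1:ℝ) := by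
      rw [← hu]; ring
    rw [harg, toIocMod_add_zsmul]
  rw [hstep1]
  have hrs : r + (i:ℕ)/(n:ℝ) = s + (((i:ℕ) + jz.toNat : ℕ):ℝ)/(n:ℝ) := by
    rw [hs_def]; push_cast; ring
  rw [hrs]
  set m : ℕ := (i:ℕ) + jz.toNat with hm
  have hi := i.isLt
  have him : m < 2*n := by omega
  have hfin : ((i + ⟨jz.toNat, hjv⟩ : Fin n) : ℕ) = m % n := by
    simp [Fin.add_def, hm]
  rw [hfin]
  rcases lt_or_ge m n with hmn | hmn
  · rw [Nat.mod_eq_of_lt hmn]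
    apply (toIocMod_eq_self zero_lt_one).mpr
    rw [zero_add]
    refine ⟨by positivity, ?_⟩
    have hmr : (m:ℝ) ≤ (n:ℝ) - 1 := by
      have hh : (m:ℝ) + 1 ≤ n := by exact_mod_cast hmn
      linarith
    calc s + (m:ℝ)/n ≤ 1/(n:ℝ) + ((n:ℝ)-1)/n :=
          add_le_add hs1 ((div_le_div_iff_of_pos_right hn').mpr hmr)
      _ = 1 := by field_simp; ring
  · have hmlt : m - n < n := by omega
    have hmod : m % n = m - n := by
      rw [Nat.mod_eq_sub_mod hmn, Nat.mod_eq_of_lt hmlt]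
    rw [hmod]
    have hsplit : s + (m:ℝ)/n = (s + ((m - n : ℕ):ℝ)/n) + (1:ℤ) • (1:ℝ) := by
      push_cast [Nat.cast_sub hmn]
      field_simp
      ring
    rw [hsplit, toIocMod_add_zsmul]
    apply (toIocMod_eq_self zero_lt_one).mpr
    rw [zero_add]
    refine ⟨by positivity, ?_⟩
    have hmr : ((m - n : ℕ):ℝ) ≤ (n:ℝ) - 1 := by
      have hh : ((m-n:ℕ):ℝ) + 1 ≤ n := by exact_mod_cast by omega
      linarith
    calc s + ((m-n:ℕ):ℝ)/n ≤ 1/(n:ℝ) + ((n:ℝ)-1)/n :=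
          add_le_add hs1 ((div_le_div_iff_of_pos_right hn').mpr hmr)
      _ = 1 := by field_simp; ring

noncomputable def myE : AddCircle (1:ℝ) → ℝ :=
  fun x => ((AddCircle.equivIoc (1:ℝ) 0 x : Ioc (0:ℝ) (0+1)) : ℝ)

lemma myE_measurable : Measurable myE :=
  measurable_subtype_coe.comp (AddCircle.measurableEquivIoc (1:ℝ) 0).measurable

lemma myE_coe (u : ℝ) : myE (u : AddCircle (1:ℝ)) = toIocMod zero_lt_one 0 u := by
  simp only [myE, AddCircle.equivIoc, QuotientAddGroup.equivIocMod_coe]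

lemma myE_coe_self {u : ℝ} (hu : u ∈ Ioc (0:ℝ) 1) : myE (u : AddCircle (1:ℝ)) = u := by
  rw [myE_coe]
  exact (toIocMod_eq_self zero_lt_one).mpr (by simpa using hu)

lemma myE_map_eq :
    Measure.map myE (volume : Measure (AddCircle (1:ℝ))) = volume.restrict (Ioc (0:ℝ) 1) := by
  have hmk := AddCircle.measurePreserving_mk (1:ℝ) 0
  rw [zero_add] at hmk
  refine Measure.ext (fun A hA => ?_)
  rw [Measure.map_apply myE_measurable hA, ← hmk.map_eq,
    Measure.map_apply AddCircle.measurable_mk' (myE_measurable hA),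
    Measure.restrict_apply (AddCircle.measurable_mk' (myE_measurable hA)),
    Measure.restrict_apply hA]
  congr 1
  ext u
  simp only [mem_inter_iff, mem_preimage, Function.comp]
  exact and_congr_left (fun hu => by rw [myE_coe_self hu])

lemma sum_tau_bound (Q : ℝ → ℝ) (hQ : Monotone Q) {n : ℕ} (hn : 0 < n) (u : ℝ) :
    (∑ k ∈ Finset.range n, Q ((k:ℝ)/n)) ≤
      (∑ i : Fin n, Q (toIocMod zero_lt_one 0 (u + (i:ℕ)/(n:ℝ)))) ∧
    (∑ i : Fin n, Q (toIocMod zero_lt_one 0 (u + (i:ℕ)/(n:ℝ)))) ≤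
      ∑ k ∈ Finset.range n, Q (((k:ℝ)+1)/n) := by
  haveI : NeZero n := ⟨hn.ne'⟩
  obtain ⟨s, hs0, hs1, j, hj⟩ := tau_decomp hn u
  have hn' : (0:ℝ) < n := Nat.cast_pos.mpr hn
  have hrw : (∑ i : Fin n, Q (toIocMod zero_lt_one 0 (u + (i:ℕ)/(n:ℝ))))
      = ∑ k : Fin n, Q (s + ((k:ℕ):ℝ)/(n:ℝ)) := by
    rw [Finset.sum_congr rfl (fun i _ => by rw [hj i])]
    exact Fintype.sum_equiv (Equiv.addRight j)
      (fun i => Q (s + (((i + j : Fin n):ℕ):ℝ)/(n:ℝ)))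
      (fun k => Q (s + ((k:ℕ):ℝ)/(n:ℝ))) (fun i => rfl)
  have hfin : ∑ k : Fin n, Q (s + ((k:ℕ):ℝ)/(n:ℝ))
      = ∑ k ∈ Finset.range n, Q (s + (k:ℝ)/(n:ℝ)) :=
    Fin.sum_univ_eq_sum_range (fun k => Q (s + (k:ℝ)/(n:ℝ))) n
  rw [hrw, hfin]
  constructor
  · refine Finset.sum_le_sum (fun k _ => hQ ?_)
    have : (0:ℝ) ≤ s := hs0.le
    linarith
  · refine Finset.sum_le_sum (fun k _ => hQ ?_)
    have : s + (k:ℝ)/n ≤ 1/(n:ℝ) + (k:ℝ)/n := by linarith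
    calc s + (k:ℝ)/n ≤ 1/(n:ℝ) + (k:ℝ)/n := this
      _ = ((k:ℝ)+1)/n := by field_simp; ring

/-- **Corollary 3.1 (a).** If `F` has support contained in `[a,b]`, `a < b`, and mean
`μ`, then the maximum over `S` in the admissible risk class `𝔖_n` of
`P(|S − E[S]| ≤ b − a)` equals `1`: there exist `X₁, …, X_n` each distributed as `F`
with `|X₁ + ⋯ + X_n − nμ| ≤ b − a` almost surely. -/
theorem max_prob_concentration_eq_one
    (ν : Measure ℝ) [IsProbabilityMeasure ν] (a b μ : ℝ) (hab : a < b)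
    (hsupp : ν (Icc a b)ᶜ = 0) (hμ : μ = ∫ x, x ∂ν) (n : ℕ) (hn : 0 < n) :
    ∃ (Ω : Type) (mΩ : MeasurableSpace Ω) (P : Measure Ω) (X : Fin n → Ω → ℝ),
      IsProbabilityMeasure P ∧
      (∀ i, Measure.map (X i) P = ν) ∧
      P {ω | |(∑ i, X i ω) - (n : ℝ) * μ| ≤ b - a} = 1 := by
  have hn' : (0:ℝ) < n := Nat.cast_pos.mpr hn
  set P : Measure ℝ := volume.restrict (Ioc (0:ℝ) 1) with hP_def
  have hP : IsProbabilityMeasure P := ⟨by simp [hP_def, Real.volume_Ioc]⟩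
  set Q : ℝ → ℝ := myQ ν a with hQ_def
  have hQmono : Monotone Q := myQ_mono hab.le hsupp
  have hQmeas : Measurable Q := hQmono.measurable
  set X : Fin n → ℝ → ℝ :=
    fun i u => Q (myE ((u : AddCircle (1:ℝ)) + (((i:ℕ):ℝ)/(n:ℝ) : ℝ))) with hX_def
  -- pointwise formula
  have hXpt : ∀ (i : Fin n) (u : ℝ),
      X i u = Q (toIocMod zero_lt_one 0 (u + ((i:ℕ):ℝ)/(n:ℝ))) := by
    intro i u
    have : (u : AddCircle (1:ℝ)) + (((i:ℕ):ℝ)/(n:ℝ) : ℝ)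
        = ((u + ((i:ℕ):ℝ)/(n:ℝ) : ℝ) : AddCircle (1:ℝ)) := rfl
    rw [hX_def]; dsimp only; rw [this, myE_coe]
  -- measurability
  have hXmeas : ∀ i, Measurable (X i) := by
    intro i
    apply hQmeas.comp
    apply myE_measurable.comp
    exact (AddCircle.measurable_mk'.comp measurable_id).add_const _
  -- distribution
  have hmap : ∀ i, Measure.map (X i) P = ν := by
    intro i
    have h1 : MeasurePreserving (fun u : ℝ => (u : AddCircle (1:ℝ))) P volume := by
      have := AddCircle.measurePreserving_mk (1:ℝ) 0
      rwa [zero_add] at this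
    have h2 : MeasurePreserving
        (fun y : AddCircle (1:ℝ) => y + ((((i:ℕ):ℝ)/(n:ℝ) : ℝ) : AddCircle (1:ℝ)))
        volume volume := measurePreserving_add_right _ _
    have h12 := h2.comp h1
    have hQE : Measure.map (fun t => Q (myE t)) (volume : Measure (AddCircle (1:ℝ))) = ν := by
      rw [show (fun t => Q (myE t)) = Q ∘ myE from rfl,
        ← Measure.map_map hQmeas myE_measurable, myE_map_eq]
      exact myQ_map_eq hab.le hsupp
    calc Measure.map (X i) P
        = Measure.map ((fun t => Q (myE t)) ∘
            ((fun y : AddCircle (1:ℝ) => y + ((((i:ℕ):ℝ)/(n:ℝ) : ℝ) : AddCircle (1:ℝ))) ∘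
              (fun u : ℝ => (u : AddCircle (1:ℝ))))) P := rfl
      _ = Measure.map (fun t => Q (myE t))
            (Measure.map ((fun y : AddCircle (1:ℝ) => y + ((((i:ℕ):ℝ)/(n:ℝ) : ℝ) : AddCircle (1:ℝ))) ∘
              (fun u : ℝ => (u : AddCircle (1:ℝ)))) P) :=
          (Measure.map_map (hQmeas.comp myE_measurable) h12.measurable).symm
      _ = Measure.map (fun t => Q (myE t)) volume := by rw [h12.map_eq]
      _ = ν := hQE
  -- range bounds
  have hXrange : ∀ i u, X i u ∈ Icc a b := fun i u => myQ_mem_Icc hab.le hsupp _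
  -- integrability
  have hXint : ∀ i, Integrable (X i) P := by
    intro i
    refine ⟨(hXmeas i).aestronglyMeasurable, ?_⟩
    refine HasFiniteIntegral.of_bounded (C := max |a| |b|) (ae_of_all _ (fun u => ?_))
    rw [Real.norm_eq_abs]
    rcases hXrange i u with ⟨h1, h2⟩
    rw [abs_le]
    constructor
    · calc -(max |a| |b|) ≤ -|a| := neg_le_neg (le_max_left _ _)
        _ ≤ a := neg_abs_le a
        _ ≤ X i u := h1
    · calc X i u ≤ b := h2
        _ ≤ |b| := le_abs_self b
        _ ≤ max |a| |b| := le_max_right _ _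
  -- mean of each X i
  have hXmean : ∀ i, ∫ u, X i u ∂P = μ := by
    intro i
    have hint : ∫ u, X i u ∂P = ∫ x, x ∂(Measure.map (X i) P) :=
      (integral_map (hXmeas i).aemeasurable measurable_id.aestronglyMeasurable).symm
    rw [hint, hmap i, hμ]
  set S : ℝ → ℝ := fun u => ∑ i : Fin n, X i u with hS_def
  have hSint : Integrable S P := integrable_finset_sum _ (fun i _ => hXint i)
  have hSmean : ∫ u, S u ∂P = (n:ℝ) * μ := by
    rw [hS_def, integral_finset_sum _ (fun i _ => hXint i)]
    simp only [hXmean]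
    rw [Finset.sum_const, Finset.card_univ, Fintype.card_fin, nsmul_eq_mul]
  set m : ℝ := ∑ k ∈ Finset.range n, Q ((k:ℝ)/n) with hm_def
  set M : ℝ := ∑ k ∈ Finset.range n, Q (((k:ℝ)+1)/n) with hM_def
  have hbounds : ∀ u, m ≤ S u ∧ S u ≤ M := by
    intro u
    have := sum_tau_bound Q hQmono hn u
    constructor
    · refine le_trans this.1 (le_of_eq ?_)
      exact Finset.sum_congr rfl (fun i _ => by rw [hXpt i u])
    · refine le_trans (le_of_eq ?_) this.2
      exact Finset.sum_congr rfl (fun i _ => by rw [hXpt i u])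
  have hMm : M - m ≤ b - a := by
    have htel : M - m = Q ((n:ℝ)/n) - Q ((0:ℝ)/n) := by
      rw [hM_def, hm_def, ← Finset.sum_sub_distrib]
      have := Finset.sum_range_sub (fun k : ℕ => Q ((k:ℝ)/n)) n
      simp only [Nat.cast_add, Nat.cast_one, Nat.cast_zero] at this
      exact this
    rw [htel, div_self hn'.ne', zero_div]
    have h1 := (myQ_mem_Icc hab.le hsupp (1:ℝ)).2
    have h0 := (myQ_mem_Icc hab.le hsupp (0:ℝ)).1
    rw [hQ_def]
    linarith
  have hmn : m ≤ (n:ℝ) * μ := by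
    rw [← hSmean]
    calc m = ∫ _, m ∂P := by simp
      _ ≤ ∫ u, S u ∂P := integral_mono (integrable_const m) hSint (fun u => (hbounds u).1)
  have hMn : (n:ℝ) * μ ≤ M := by
    rw [← hSmean]
    calc ∫ u, S u ∂P ≤ ∫ _, M ∂P := integral_mono hSint (integrable_const M)
          (fun u => (hbounds u).2)
      _ = M := by simp
  refine ⟨ℝ, inferInstance, P, X, hP, hmap, ?_⟩
  have hset : {ω : ℝ | |(∑ i, X i ω) - (n : ℝ) * μ| ≤ b - a} = univ := by
    ext u
    simp only [mem_setOf_eq, mem_univ, iff_true]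
    rcases hbounds u with ⟨h1, h2⟩
    rw [abs_le]
    exact ⟨by linarith, by linarith⟩
  rw [hset]
  exact measure_univ
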